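/- If g is a polynomial over ℂ satisfying g(g(w)) = w for all w, then g is linear; more precisely, either g(w) = w for all w, or there exists b ∈ ℂ such that g(w) = -w + b for all w. -/
import Mathlib


open Polynomial

/-- If `g` is a polynomial over `ℂ` with `g(g(w)) = w`, then
either `g = w` or `g = -w + b` for some `b ∈ ℂ`. -/
theorem polynomial_involution_is_linear (g : Polynomial ℂ)
    (h : g.comp g = X) :
    g = X ∨ ∃ b : ℂ, g = -X + C b := by
  have hdeg : g.natDegree = 1 := by
    have h1 : (g.comp g).natDegree = 1 := by rw [h, natDegree_X]
    rw [natDegree_comp] at h1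
    nlinarith [h1]
  obtain ⟨a, ha, b, hg⟩ := Polynomial.natDegree_eq_one.mp hdeg
  subst hg
  have hcomp : (C a * X + C b).comp (C a * X + C b)
      = C (a * a) * X + C (a * b + b) := by
    simp [comp, eval₂_add, eval₂_mul]; ring
  rw [hcomp] at h
  have ha2 : a * a = 1 := by
    have := congrArg (fun p => Polynomial.coeff p 1) h
    simpa [coeff_add, coeff_C_mul] using this
  have hb : a * b + b = 0 := by
    have := congrArg (fun p => Polynomial.coeff p 0) h
    simpa [coeff_add, coeff_C_mul] using this
  have : a = 1 ∨ a = -1 := by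
    have : (a - 1) * (a + 1) = 0 := by ring_nf; linear_combination ha2
    rcases mul_eq_zero.mp this with h1 | h1
    · left; linear_combination h1
    · right; linear_combination h1
  rcases this with rfl | rfl
  · left
    have : b = 0 := by linear_combination hb / 2 * 1
    subst this; simp
  · right
    exact ⟨b, by simp [map_neg]⟩
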